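/- For every k ∈ ℕ and reals ε, δ > 0, there exists n ∈ ℕ such that for every finite set I with |I| > n there is a partition 2^I = a⁰ ∪ a¹ (disjoint) such that for every nonempty X ⊆ 2^I with |X| ≤ k, the quantity |⋂_{x∈X}(a⁰ + x)| / 2^{|I|} differs from 2^{-|X|} by less than δ. -/

import Mathlib

open scoped Classical
open Finset

set_option maxHeartbeats 2000000
set_option linter.unusedSectionVars false
namespace S3

lemma exp_le_quad {x : ℝ} (h : |x| ≤ 1) : Real.exp x ≤ 1 + x + x ^ 2 := by
  have hb := Real.exp_bound h (n := 2) (by norm_num)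
  have : Real.exp x - (1 + x) ≤ |x| ^ 2 * (3 / (2 * 2)) := by
    have := abs_le.mp hb
    simpa [Finset.sum_range_succ] using this.2
  have hx2 : |x| ^ 2 = x ^ 2 := sq_abs x
  nlinarith [sq_nonneg x]

lemma sum_powerset_union {α : Type*} [DecidableEq α] {s t : Finset α}
    (hst : Disjoint s t) (F : Finset α → ℝ) :
    ∑ a ∈ (s ∪ t).powerset, F a = ∑ b ∈ s.powerset, ∑ c ∈ t.powerset, F (b ∪ c) := by
  rw [← Finset.sum_product']
  refine (Finset.sum_nbij' (fun bc => bc.1 ∪ bc.2) (fun a => (a ∩ s, a ∩ t)) ?_ ?_ ?_ ?_ ?_).symm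
  · rintro ⟨b, c⟩ hbc
    simp only [Finset.mem_product, Finset.mem_powerset] at hbc
    exact Finset.mem_powerset.mpr (Finset.union_subset_union hbc.1 hbc.2)
  · intro a ha
    simp only [Finset.mem_powerset] at ha
    simp only [Finset.mem_product, Finset.mem_powerset]
    exact ⟨Finset.inter_subset_right, Finset.inter_subset_right⟩
  · rintro ⟨b, c⟩ hbc
    simp only [Finset.mem_product, Finset.mem_powerset] at hbc
    have hb : (b ∪ c) ∩ s = b := by
      rw [Finset.union_inter_distrib_right, Finset.inter_eq_left.mpr hbc.1,
        Finset.disjoint_iff_inter_eq_empty.mp (hst.symm.mono_left hbc.2), Finset.union_empty]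
    have hc : (b ∪ c) ∩ t = c := by
      rw [Finset.union_inter_distrib_right, Finset.inter_eq_left.mpr hbc.2,
        Finset.disjoint_iff_inter_eq_empty.mp (hst.mono_left hbc.1), Finset.empty_union]
    simp [hb, hc]
  · intro a ha
    simp only [Finset.mem_powerset] at ha
    show a ∩ s ∪ a ∩ t = a
    rw [← Finset.inter_union_distrib_left, Finset.inter_eq_left.mpr ha]
  · rintro ⟨b, c⟩ hbc
    rfl


lemma sum_indicator_superset {α : Type*} [DecidableEq α] {S p : Finset α} (h : S ⊆ p) :
    ∑ b ∈ p.powerset, (if S ⊆ b then (1:ℝ) else 0) = 2 ^ (p.card - S.card) := by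
  have hps : (p \ S) ∪ S = p := Finset.sdiff_union_of_subset h
  have hd : Disjoint (p \ S) S := Finset.sdiff_disjoint
  rw [← hps, sum_powerset_union hd]
  have hinner : ∀ b ∈ (p \ S).powerset,
      ∑ c ∈ S.powerset, (if S ⊆ b ∪ c then (1:ℝ) else 0) = 1 := by
    intro b hb
    simp only [Finset.mem_powerset] at hb
    have : ∀ c ∈ S.powerset, (if S ⊆ b ∪ c then (1:ℝ) else 0) = if c = S then 1 else 0 := by
      intro c hc
      simp only [Finset.mem_powerset] at hc
      congr 1
      simp only [eq_iff_iff]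
      constructor
      · intro hsub
        refine Finset.Subset.antisymm hc (fun x hx => ?_)
        rcases Finset.mem_union.mp (hsub hx) with h1 | h1
        · exact absurd hx (Finset.disjoint_right.mp hd.symm (hb h1))
        · exact h1
      · rintro rfl; exact Finset.subset_union_right
    rw [Finset.sum_congr rfl this, Finset.sum_ite_eq' S.powerset S (fun _ => (1:ℝ))]
    simp
  rw [Finset.sum_congr rfl hinner]
  simp only [Finset.sum_const, Finset.card_powerset, nsmul_eq_mul, mul_one]
  rw [Finset.card_sdiff_of_subset h]
  push_cast
  rw [hps]

/-- factorization of a sum over the powerset of a disjoint union of parts -/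
lemma prod_factorization {α : Type*} [DecidableEq α] (J : Finset (Finset α))
    (hdisj : ∀ p ∈ J, ∀ p' ∈ J, p ≠ p' → Disjoint p p')
    (g : Finset α → Finset α → ℝ) :
    ∑ a ∈ (J.sup id).powerset, ∏ p ∈ J, g p (a ∩ p)
      = ∏ p ∈ J, ∑ b ∈ p.powerset, g p b := by
  induction J using Finset.induction_on with
  | empty => simp
  | @insert p J hp ih =>
    have hdisjJ : ∀ q ∈ J, ∀ q' ∈ J, q ≠ q' → Disjoint q q' := by
      intro q hq q' hq' hne
      exact hdisj q (Finset.mem_insert_of_mem hq) q' (Finset.mem_insert_of_mem hq') hne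
    have hpd : Disjoint p (J.sup id) := by
      rw [Finset.disjoint_sup_right]
      intro q hq
      exact hdisj p (Finset.mem_insert_self p J) q (Finset.mem_insert_of_mem hq)
        (fun hpq => hp (hpq ▸ hq))
    rw [Finset.sup_insert]
    show ∑ a ∈ (p ∪ J.sup id).powerset, ∏ q ∈ insert p J, g q (a ∩ q) = _
    rw [sum_powerset_union hpd]
    have hstep : ∀ b ∈ p.powerset, ∀ c ∈ (J.sup id).powerset,
        ∏ q ∈ insert p J, g q ((b ∪ c) ∩ q) = g p b * ∏ q ∈ J, g q (c ∩ q) := by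
      intro b hb c hc
      simp only [Finset.mem_powerset] at hb hc
      rw [Finset.prod_insert hp]
      congr 1
      · congr 1
        rw [Finset.union_inter_distrib_right, Finset.inter_eq_left.mpr hb,
          Finset.disjoint_iff_inter_eq_empty.mp (hpd.symm.mono_left hc), Finset.union_empty]
      · refine Finset.prod_congr rfl (fun q hq => ?_)
        congr 1
        have hbq : Disjoint b q := by
          refine Disjoint.mono_left hb ?_
          exact hdisj p (Finset.mem_insert_self p J) q (Finset.mem_insert_of_mem hq)
            (fun hpq => hp (hpq ▸ hq))
        rw [Finset.union_inter_distrib_right,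
          Finset.disjoint_iff_inter_eq_empty.mp hbq, Finset.empty_union]
    calc ∑ b ∈ p.powerset, ∑ c ∈ (J.sup id).powerset, ∏ q ∈ insert p J, g q ((b ∪ c) ∩ q)
        = ∑ b ∈ p.powerset, ∑ c ∈ (J.sup id).powerset, g p b * ∏ q ∈ J, g q (c ∩ q) := by
          refine Finset.sum_congr rfl (fun b hb => Finset.sum_congr rfl (fun c hc => hstep b hb c hc))
      _ = (∑ b ∈ p.powerset, g p b) * ∑ c ∈ (J.sup id).powerset, ∏ q ∈ J, g q (c ∩ q) := by
          rw [← Finset.sum_mul_sum]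
      _ = _ := by rw [ih hdisjJ, Finset.prod_insert hp]


section PerX

variable {G : Type*} [Fintype G] [DecidableEq G] [AddCommGroup G]

def SS (X : Finset G) (x₀ : G) : Finset G := X.image (· + x₀)

def VV (X : Finset G) (x₀ : G) : Finset G := (SS X x₀).powerset.image (fun Y => Y.sum id)

def coset (X : Finset G) (x₀ : G) (c : G) : Finset G := (VV X x₀).image (· + c)

variable (hG2 : ∀ x : G, x + x = 0) (X : Finset G) (x₀ : G)

lemma VV_zero : (0 : G) ∈ VV X x₀ := by
  refine Finset.mem_image.mpr ⟨∅, by simp, by simp⟩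

lemma SS_subset_VV : SS X x₀ ⊆ VV X x₀ := by
  intro y hy
  exact Finset.mem_image.mpr ⟨{y}, by simpa using hy, by simp⟩

include hG2 in
lemma VV_add {u v : G} (hu : u ∈ VV X x₀) (hv : v ∈ VV X x₀) : u + v ∈ VV X x₀ := by
  obtain ⟨Y, hY, rfl⟩ := Finset.mem_image.mp hu
  obtain ⟨Y', hY', rfl⟩ := Finset.mem_image.mp hv
  simp only [Finset.mem_powerset] at hY hY'
  refine Finset.mem_image.mpr ⟨(Y \ Y') ∪ (Y' \ Y), ?_, ?_⟩
  · refine Finset.mem_powerset.mpr (Finset.union_subset ?_ ?_)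
    · exact (Finset.sdiff_subset).trans hY
    · exact (Finset.sdiff_subset).trans hY'
  · have h1 : Y.sum id = (Y \ Y').sum id + (Y ∩ Y').sum id := by
      rw [← Finset.sum_union (Finset.sdiff_disjoint.mono_right Finset.inter_subset_right),
        Finset.sdiff_union_inter]
    have h2 : Y'.sum id = (Y' \ Y).sum id + (Y ∩ Y').sum id := by
      rw [← Finset.sum_union (Finset.sdiff_disjoint.mono_right Finset.inter_subset_left),
        Finset.inter_comm, Finset.sdiff_union_inter]
    have h3 : ((Y \ Y') ∪ (Y' \ Y)).sum id = (Y \ Y').sum id + (Y' \ Y).sum id :=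
      Finset.sum_union disjoint_sdiff_sdiff
    rw [h1, h2, h3]
    have hc := hG2 ((Y ∩ Y').sum id)
    have habel : (Y \ Y').sum id + (Y ∩ Y').sum id + ((Y' \ Y).sum id + (Y ∩ Y').sum id)
        = (Y \ Y').sum id + (Y' \ Y).sum id + ((Y ∩ Y').sum id + (Y ∩ Y').sum id) := by abel
    rw [habel, hc, add_zero]
  
include hG2 in
lemma mem_coset {s c : G} : s ∈ coset X x₀ c ↔ s + c ∈ VV X x₀ := by
  constructor
  · rintro hs
    obtain ⟨v, hv, rfl⟩ := Finset.mem_image.mp hs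
    have : v + c + c = v := by rw [add_assoc, hG2, add_zero]
    rwa [this]
  · intro h
    refine Finset.mem_image.mpr ⟨s + c, h, ?_⟩
    rw [add_assoc, hG2, add_zero]

lemma card_coset (c : G) : (coset X x₀ c).card = (VV X x₀).card :=
  Finset.card_image_of_injective _ (add_left_injective c)

include hG2 in
lemma coset_eq {u c : G} (h : u + c ∈ VV X x₀) : coset X x₀ c = coset X x₀ u := by
  ext s
  rw [mem_coset hG2, mem_coset hG2]
  constructor
  · intro hs
    have := VV_add hG2 X x₀ hs h
    have heq : s + c + (u + c) = s + u := by
      have h2 := hG2 c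
      have : s + c + (u + c) = s + u + (c + c) := by abel
      rw [this, h2, add_zero]
    rwa [heq] at this
  · intro hs
    have := VV_add hG2 X x₀ hs h
    have heq : s + u + (u + c) = s + c := by
      have h2 := hG2 u
      have : s + u + (u + c) = s + c + (u + u) := by abel
      rw [this, h2, add_zero]
    rwa [heq] at this

include hG2 in
lemma mem_coset_self (c : G) : c ∈ coset X x₀ c := by
  rw [mem_coset hG2, hG2]
  exact VV_zero X x₀

def JJ (X : Finset G) (x₀ : G) : Finset (Finset G) := Finset.univ.image (coset X x₀)

include hG2 in
lemma JJ_disj : ∀ p ∈ JJ X x₀, ∀ p' ∈ JJ X x₀, p ≠ p' → Disjoint p p' := by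
  intro p hp p' hp' hne
  obtain ⟨c, _, rfl⟩ := Finset.mem_image.mp hp
  obtain ⟨c', _, rfl⟩ := Finset.mem_image.mp hp'
  rw [Finset.disjoint_left]
  intro s hs hs'
  rw [mem_coset hG2] at hs hs'
  exact hne ((coset_eq hG2 X x₀ hs).trans (coset_eq hG2 X x₀ hs').symm)

include hG2 in
lemma JJ_sup : (JJ X x₀).sup id = Finset.univ := by
  apply Finset.Subset.antisymm (Finset.subset_univ _)
  intro s _
  rw [Finset.mem_sup]
  exact ⟨coset X x₀ s, Finset.mem_image.mpr ⟨s, Finset.mem_univ s, rfl⟩,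
    mem_coset_self hG2 X x₀ s⟩

include hG2 in
lemma JJ_filter_eq (u : G) : (JJ X x₀).filter (fun p => u ∈ p) = {coset X x₀ u} := by
  ext p
  simp only [Finset.mem_filter, Finset.mem_singleton]
  constructor
  · rintro ⟨hp, hup⟩
    obtain ⟨c, _, rfl⟩ := Finset.mem_image.mp hp
    exact (coset_eq hG2 X x₀ ((mem_coset hG2 X x₀).mp hup)).symm ▸ rfl
  · rintro rfl
    exact ⟨Finset.mem_image.mpr ⟨u, Finset.mem_univ u, rfl⟩, mem_coset_self hG2 X x₀ u⟩

include hG2 in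
lemma JJ_card_sum : ∑ p ∈ JJ X x₀, p.card = Fintype.card G := by
  have h1 : ((JJ X x₀).biUnion id).card = ∑ p ∈ JJ X x₀, p.card :=
    Finset.card_biUnion (fun p hp p' hp' hne => JJ_disj hG2 X x₀ p hp p' hp' hne)
  rw [← h1, ← Finset.sup_eq_biUnion, JJ_sup hG2, Finset.card_univ]

def TT (x₀ : G) (p : Finset G) : Finset G := Finset.univ.filter (fun t => t + x₀ ∈ p)

def yy (X : Finset G) (t : G) (b : Finset G) : ℝ := if (∀ x ∈ X, t + x ∈ b) then 1 else 0

def Zp (X : Finset G) (x₀ : G) (p b : Finset G) : ℝ := ∑ t ∈ TT x₀ p, yy X t b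

include hG2 in
lemma TT_card {p : Finset G} (hp : p ∈ JJ X x₀) : (TT x₀ p).card = (VV X x₀).card := by
  obtain ⟨c, _, rfl⟩ := Finset.mem_image.mp hp
  have : TT x₀ (coset X x₀ c) = coset X x₀ (x₀ + c) := by
    ext t
    rw [TT, Finset.mem_filter, mem_coset hG2, mem_coset hG2, add_assoc]
    simp
  rw [this, card_coset]

include hG2 in
lemma TT_shift_mem (hx₀ : x₀ ∈ X) {p : Finset G} (hp : p ∈ JJ X x₀) {t : G} (ht : t ∈ TT x₀ p)
    {x : G} (hx : x ∈ X) : t + x ∈ p := by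
  obtain ⟨c, _, rfl⟩ := Finset.mem_image.mp hp
  rw [TT, Finset.mem_filter, mem_coset hG2] at ht
  rw [mem_coset hG2]
  have hxS : x + x₀ ∈ VV X x₀ :=
    SS_subset_VV X x₀ (Finset.mem_image.mpr ⟨x, hx, rfl⟩)
  have hsum := VV_add hG2 X x₀ ht.2 hxS
  have heq : t + x₀ + c + (x + x₀) = t + x + c := by
    have h2 := hG2 x₀
    have : t + x₀ + c + (x + x₀) = t + x + c + (x₀ + x₀) := by abel
    rw [this, h2, add_zero]
  rwa [heq] at hsum

include hG2 in
lemma yy_localize (hx₀ : x₀ ∈ X) {p : Finset G} (hp : p ∈ JJ X x₀) {t : G} (ht : t ∈ TT x₀ p)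
    (a : Finset G) : yy X t (a ∩ p) = yy X t a := by
  unfold yy
  congr 1
  simp only [eq_iff_iff]
  constructor
  · intro h x hx
    exact Finset.mem_inter.mp (h x hx) |>.1
  · intro h x hx
    exact Finset.mem_inter.mpr ⟨h x hx, TT_shift_mem hG2 X x₀ hx₀ hp ht hx⟩

include hG2 in
lemma cnt_eq_sum (a : Finset G) :
    ((Finset.univ.filter (fun t => ∀ x ∈ X, t + x ∈ a)).card : ℝ)
      = ∑ p ∈ JJ X x₀, ∑ t ∈ TT x₀ p, yy X t a := by
  have h1 : ((Finset.univ.filter (fun t => ∀ x ∈ X, t + x ∈ a)).card : ℝ)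
      = ∑ t : G, yy X t a := by
    rw [Finset.card_filter]
    push_cast
    rfl
  rw [h1]
  -- partition the sum over t according to which coset t + x₀ lies in
  have h2 : ∀ t : G, ∑ p ∈ JJ X x₀, (if t + x₀ ∈ p then yy X t a else 0) = yy X t a := by
    intro t
    rw [← Finset.sum_filter]
    have := JJ_filter_eq hG2 X x₀ (t + x₀)
    have hfilter : (JJ X x₀).filter (fun p => t + x₀ ∈ p) = {coset X x₀ (t + x₀)} := this
    rw [hfilter, Finset.sum_singleton]
  calc ∑ t : G, yy X t a = ∑ t : G, ∑ p ∈ JJ X x₀, (if t + x₀ ∈ p then yy X t a else 0) := by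
        exact (Finset.sum_congr rfl (fun t _ => (h2 t).symm))
    _ = ∑ p ∈ JJ X x₀, ∑ t : G, (if t + x₀ ∈ p then yy X t a else 0) := Finset.sum_comm
    _ = ∑ p ∈ JJ X x₀, ∑ t ∈ TT x₀ p, yy X t a := by
        refine Finset.sum_congr rfl (fun p _ => ?_)
        rw [TT, Finset.sum_filter]

include hG2 in
lemma sum_yy_powerset (hx₀ : x₀ ∈ X) {p : Finset G} (hp : p ∈ JJ X x₀) {t : G} (ht : t ∈ TT x₀ p) :
    ∑ b ∈ p.powerset, yy X t b = 2 ^ (p.card - X.card) := by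
  have hS : (X.image (fun x => t + x)) ⊆ p := by
    intro u hu
    obtain ⟨x, hx, rfl⟩ := Finset.mem_image.mp hu
    exact TT_shift_mem hG2 X x₀ hx₀ hp ht hx
  have hcard : (X.image (fun x => t + x)).card = X.card :=
    Finset.card_image_of_injective _ (add_right_injective t)
  have hiff : ∀ b : Finset G, (∀ x ∈ X, t + x ∈ b) ↔ (X.image (fun x => t + x)) ⊆ b := by
    intro b
    constructor
    · intro h u hu
      obtain ⟨x, hx, rfl⟩ := Finset.mem_image.mp hu
      exact h x hx
    · intro h x hx
      exact h (Finset.mem_image.mpr ⟨x, hx, rfl⟩)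
  have : ∀ b ∈ p.powerset, yy X t b = if (X.image (fun x => t + x)) ⊆ b then (1:ℝ) else 0 := by
    intro b _
    unfold yy
    congr 1
    simp [hiff b]
  rw [Finset.sum_congr rfl this, sum_indicator_superset hS, hcard]

include hG2 in
lemma Xcard_le (hx₀ : x₀ ∈ X) {p : Finset G} (hp : p ∈ JJ X x₀) : X.card ≤ p.card := by
  have hV1 : 0 < (VV X x₀).card := Finset.card_pos.mpr ⟨0, VV_zero X x₀⟩
  have : 0 < (TT x₀ p).card := by rw [TT_card hG2 X x₀ hp]; exact hV1
  obtain ⟨t, ht⟩ := Finset.card_pos.mp this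
  have hS : (X.image (fun x => t + x)) ⊆ p := by
    intro u hu
    obtain ⟨x, hx, rfl⟩ := Finset.mem_image.mp hu
    exact TT_shift_mem hG2 X x₀ hx₀ hp ht hx
  calc X.card = (X.image (fun x => t + x)).card :=
        (Finset.card_image_of_injective _ (add_right_injective t)).symm
    _ ≤ p.card := Finset.card_le_card hS

lemma Zp_nonneg (p b : Finset G) : 0 ≤ Zp X x₀ p b := by
  refine Finset.sum_nonneg (fun t _ => ?_)
  unfold yy; positivity

lemma Zp_le (p b : Finset G) : Zp X x₀ p b ≤ (TT x₀ p).card := by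
  calc Zp X x₀ p b ≤ ∑ _t ∈ TT x₀ p, (1:ℝ) := by
        refine Finset.sum_le_sum (fun t _ => ?_)
        unfold yy
        split <;> norm_num
    _ = (TT x₀ p).card := by simp

include hG2 in
lemma sum_Zp_powerset (hx₀ : x₀ ∈ X) {p : Finset G} (hp : p ∈ JJ X x₀) :
    ∑ b ∈ p.powerset, Zp X x₀ p b
      = (2:ℝ) ^ p.card * (((TT x₀ p).card : ℝ) * (1/2 : ℝ) ^ X.card) := by
  unfold Zp
  rw [Finset.sum_comm]
  have : ∀ t ∈ TT x₀ p, ∑ b ∈ p.powerset, yy X t b = (2:ℝ) ^ (p.card - X.card) := by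
    intro t ht
    exact_mod_cast sum_yy_powerset hG2 X x₀ hx₀ hp ht
  rw [Finset.sum_congr rfl this, Finset.sum_const, nsmul_eq_mul]
  have hle := Xcard_le hG2 X x₀ hx₀ hp
  have hpow : (2:ℝ) ^ (p.card - X.card) = 2 ^ p.card * (1/2:ℝ) ^ X.card := by
    rw [one_div, inv_pow, eq_comm, mul_inv_eq_iff_eq_mul₀ (by positivity), ← pow_add]
    congr 1
    omega
  rw [hpow]
  ring

include hG2 in
lemma part_mgf (hx₀ : x₀ ∈ X) {p : Finset G} (hp : p ∈ JJ X x₀) (ρ : ℝ)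
    (hρ : |ρ| * ((VV X x₀).card : ℝ) ≤ 1) :
    ∑ b ∈ p.powerset,
        Real.exp (ρ * (Zp X x₀ p b - ((TT x₀ p).card : ℝ) * (1/2 : ℝ) ^ X.card))
      ≤ 2 ^ p.card * Real.exp (ρ ^ 2 * ((VV X x₀).card : ℝ) ^ 2) := by
  set B : ℝ := ((VV X x₀).card : ℝ) with hB
  set m : ℝ := ((TT x₀ p).card : ℝ) * (1/2 : ℝ) ^ X.card with hm
  have hTB : ((TT x₀ p).card : ℝ) = B := by rw [hB]; exact_mod_cast TT_card hG2 X x₀ hp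
  have hBnonneg : (0:ℝ) ≤ B := by positivity
  have hmB : 0 ≤ m ∧ m ≤ B := by
    constructor
    · positivity
    · rw [hm, hTB]
      calc B * (1/2:ℝ) ^ X.card ≤ B * 1 := by
            refine mul_le_mul_of_nonneg_left ?_ hBnonneg
            exact pow_le_one₀ (by norm_num) (by norm_num)
        _ = B := mul_one B
  have hdev : ∀ b : Finset G, |Zp X x₀ p b - m| ≤ B := by
    intro b
    rw [abs_le]
    constructor
    · have := Zp_nonneg X x₀ p b
      linarith [hmB.2]
    · have := Zp_le X x₀ p b
      rw [hTB] at this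
      linarith [hmB.1]
  have hterm : ∀ b : Finset G,
      Real.exp (ρ * (Zp X x₀ p b - m)) ≤ 1 + ρ * (Zp X x₀ p b - m) + ρ ^ 2 * B ^ 2 := by
    intro b
    have habs : |ρ * (Zp X x₀ p b - m)| ≤ 1 := by
      rw [abs_mul]
      calc |ρ| * |Zp X x₀ p b - m| ≤ |ρ| * B :=
            mul_le_mul_of_nonneg_left (hdev b) (abs_nonneg ρ)
        _ ≤ 1 := hρ
    calc Real.exp (ρ * (Zp X x₀ p b - m)) ≤ 1 + ρ * (Zp X x₀ p b - m)
          + (ρ * (Zp X x₀ p b - m)) ^ 2 := exp_le_quad habs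
      _ ≤ 1 + ρ * (Zp X x₀ p b - m) + ρ ^ 2 * B ^ 2 := by
          have h1 : (ρ * (Zp X x₀ p b - m)) ^ 2 ≤ ρ ^ 2 * B ^ 2 := by
            rw [mul_pow]
            refine mul_le_mul_of_nonneg_left ?_ (sq_nonneg ρ)
            exact sq_le_sq' (by linarith [(abs_le.mp (hdev b)).1]) ((abs_le.mp (hdev b)).2)
          linarith
  calc ∑ b ∈ p.powerset, Real.exp (ρ * (Zp X x₀ p b - m))
      ≤ ∑ b ∈ p.powerset, (1 + ρ * (Zp X x₀ p b - m) + ρ ^ 2 * B ^ 2) :=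
        Finset.sum_le_sum (fun b _ => hterm b)
    _ = 2 ^ p.card * (1 + ρ ^ 2 * B ^ 2) := by
        rw [Finset.sum_add_distrib, Finset.sum_add_distrib, ← Finset.mul_sum,
          Finset.sum_sub_distrib, sum_Zp_powerset hG2 X x₀ hx₀ hp]
        simp only [Finset.sum_const, Finset.card_powerset, nsmul_eq_mul, mul_one]
        rw [← hm]
        push_cast
        ring
    _ ≤ 2 ^ p.card * Real.exp (ρ ^ 2 * B ^ 2) := by
        refine mul_le_mul_of_nonneg_left ?_ (by positivity)
        have := Real.add_one_le_exp (ρ ^ 2 * B ^ 2)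
        linarith

include hG2 in
lemma JJ_part_card {p : Finset G} (hp : p ∈ JJ X x₀) : p.card = (VV X x₀).card := by
  obtain ⟨c, _, rfl⟩ := Finset.mem_image.mp hp
  exact card_coset X x₀ c

include hG2 in
lemma q_eq : (JJ X x₀).card * (VV X x₀).card = Fintype.card G := by
  have := JJ_card_sum hG2 X x₀
  rw [Finset.sum_congr rfl (fun p hp => JJ_part_card hG2 X x₀ hp)] at this
  simpa using this

include hG2 in
lemma total_mgf (hx₀ : x₀ ∈ X) (ρ : ℝ) (hρ : |ρ| * ((VV X x₀).card : ℝ) ≤ 1) :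
    ∑ a ∈ (Finset.univ : Finset G).powerset,
        Real.exp (ρ * (((Finset.univ.filter (fun t => ∀ x ∈ X, t + x ∈ a)).card : ℝ)
          - (Fintype.card G : ℝ) * (1/2 : ℝ) ^ X.card))
      ≤ 2 ^ (Fintype.card G)
          * Real.exp (((JJ X x₀).card : ℝ) * (ρ ^ 2 * ((VV X x₀).card : ℝ) ^ 2)) := by
  set B : ℝ := ((VV X x₀).card : ℝ) with hB
  have hμ : (Fintype.card G : ℝ) * (1/2 : ℝ) ^ X.card
      = ∑ p ∈ JJ X x₀, ((TT x₀ p).card : ℝ) * (1/2 : ℝ) ^ X.card := by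
    rw [← Finset.sum_mul]
    congr 1
    have : ∀ p ∈ JJ X x₀, ((TT x₀ p).card : ℝ) = (p.card : ℝ) := by
      intro p hp
      rw [TT_card hG2 X x₀ hp, JJ_part_card hG2 X x₀ hp]
    rw [Finset.sum_congr rfl this]
    have h := JJ_card_sum hG2 X x₀
    exact_mod_cast h.symm
  have hcnt : ∀ a : Finset G,
      ((Finset.univ.filter (fun t => ∀ x ∈ X, t + x ∈ a)).card : ℝ)
        = ∑ p ∈ JJ X x₀, Zp X x₀ p (a ∩ p) := by
    intro a
    rw [cnt_eq_sum hG2 X x₀ a]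
    refine Finset.sum_congr rfl (fun p hp => Finset.sum_congr rfl (fun t ht => ?_))
    exact (yy_localize hG2 X x₀ hx₀ hp ht a).symm
  have hexp : ∀ a : Finset G,
      Real.exp (ρ * (((Finset.univ.filter (fun t => ∀ x ∈ X, t + x ∈ a)).card : ℝ)
          - (Fintype.card G : ℝ) * (1/2 : ℝ) ^ X.card))
        = ∏ p ∈ JJ X x₀,
            Real.exp (ρ * (Zp X x₀ p (a ∩ p) - ((TT x₀ p).card : ℝ) * (1/2 : ℝ) ^ X.card)) := by
    intro a
    rw [← Real.exp_sum]
    congr 1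
    rw [← Finset.mul_sum, hcnt a, hμ, ← Finset.sum_sub_distrib]
  calc ∑ a ∈ (Finset.univ : Finset G).powerset,
        Real.exp (ρ * (((Finset.univ.filter (fun t => ∀ x ∈ X, t + x ∈ a)).card : ℝ)
          - (Fintype.card G : ℝ) * (1/2 : ℝ) ^ X.card))
      = ∑ a ∈ ((JJ X x₀).sup id).powerset, ∏ p ∈ JJ X x₀,
          Real.exp (ρ * (Zp X x₀ p (a ∩ p) - ((TT x₀ p).card : ℝ) * (1/2 : ℝ) ^ X.card)) := by
        rw [JJ_sup hG2 X x₀]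
        exact Finset.sum_congr rfl (fun a _ => hexp a)
    _ = ∏ p ∈ JJ X x₀, ∑ b ∈ p.powerset,
          Real.exp (ρ * (Zp X x₀ p b - ((TT x₀ p).card : ℝ) * (1/2 : ℝ) ^ X.card)) :=
        prod_factorization (JJ X x₀) (JJ_disj hG2 X x₀)
          (fun p b => Real.exp (ρ * (Zp X x₀ p b - ((TT x₀ p).card : ℝ) * (1/2 : ℝ) ^ X.card)))
    _ ≤ ∏ p ∈ JJ X x₀, (2 ^ p.card * Real.exp (ρ ^ 2 * B ^ 2)) := by
        refine Finset.prod_le_prod (fun p _ => ?_) (fun p hp => ?_)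
        · exact Finset.sum_nonneg (fun b _ => (Real.exp_pos _).le)
        · exact part_mgf hG2 X x₀ hx₀ hp ρ hρ
    _ = 2 ^ (Fintype.card G) * Real.exp (((JJ X x₀).card : ℝ) * (ρ ^ 2 * B ^ 2)) := by
        rw [Finset.prod_mul_distrib, Finset.prod_const, Finset.prod_pow_eq_pow_sum,
          JJ_card_sum hG2 X x₀, ← Real.exp_nat_mul]

include hG2 in
lemma markov_count (hx₀ : x₀ ∈ X) (ρ s : ℝ) (hρ : |ρ| * ((VV X x₀).card : ℝ) ≤ 1) :
    (((Finset.univ : Finset G).powerset.filter (fun a =>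
        s ≤ ρ * (((Finset.univ.filter (fun t => ∀ x ∈ X, t + x ∈ a)).card : ℝ)
          - (Fintype.card G : ℝ) * (1/2 : ℝ) ^ X.card))).card : ℝ)
      ≤ 2 ^ (Fintype.card G)
          * Real.exp (((JJ X x₀).card : ℝ) * (ρ ^ 2 * ((VV X x₀).card : ℝ) ^ 2) - s) := by
  set F : Finset G → ℝ := fun a =>
    ρ * (((Finset.univ.filter (fun t => ∀ x ∈ X, t + x ∈ a)).card : ℝ)
      - (Fintype.card G : ℝ) * (1/2 : ℝ) ^ X.card) with hF
  set Bad := (Finset.univ : Finset G).powerset.filter (fun a => s ≤ F a) with hBad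
  have h1 : (Bad.card : ℝ) * Real.exp s ≤ ∑ a ∈ Bad, Real.exp (F a) := by
    calc (Bad.card : ℝ) * Real.exp s = ∑ _a ∈ Bad, Real.exp s := by
          rw [Finset.sum_const, nsmul_eq_mul]
      _ ≤ ∑ a ∈ Bad, Real.exp (F a) := by
          refine Finset.sum_le_sum (fun a ha => ?_)
          have := (Finset.mem_filter.mp ha).2
          exact Real.exp_le_exp.mpr this
  have h2 : ∑ a ∈ Bad, Real.exp (F a) ≤ ∑ a ∈ (Finset.univ : Finset G).powerset, Real.exp (F a) := by
    refine Finset.sum_le_sum_of_subset_of_nonneg (Finset.filter_subset _ _) ?_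
    intro a _ _
    exact (Real.exp_pos _).le
  have h3 := total_mgf hG2 X x₀ hx₀ ρ hρ
  have h4 : (Bad.card : ℝ) * Real.exp s
      ≤ 2 ^ (Fintype.card G)
          * Real.exp (((JJ X x₀).card : ℝ) * (ρ ^ 2 * ((VV X x₀).card : ℝ) ^ 2)) := by
    calc (Bad.card : ℝ) * Real.exp s ≤ ∑ a ∈ Bad, Real.exp (F a) := h1
      _ ≤ ∑ a ∈ (Finset.univ : Finset G).powerset, Real.exp (F a) := h2
      _ ≤ _ := h3
  have hs : (0:ℝ) < Real.exp s := Real.exp_pos s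
  have h5 : (Bad.card : ℝ)
      ≤ 2 ^ (Fintype.card G)
          * Real.exp (((JJ X x₀).card : ℝ) * (ρ ^ 2 * ((VV X x₀).card : ℝ) ^ 2)) / Real.exp s := by
    rw [le_div_iff₀ hs]
    exact h4
  calc (Bad.card : ℝ) ≤ _ := h5
    _ = _ := by rw [Real.exp_sub, mul_div_assoc]

lemma VV_card_pos : 0 < (VV X x₀).card := Finset.card_pos.mpr ⟨0, VV_zero X x₀⟩

lemma VV_card_le {k : ℕ} (hXk : X.card ≤ k) : (VV X x₀).card ≤ 2 ^ k := by
  calc (VV X x₀).card ≤ (SS X x₀).powerset.card := Finset.card_image_le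
    _ = 2 ^ (SS X x₀).card := Finset.card_powerset _
    _ ≤ 2 ^ k := by
        refine Nat.pow_le_pow_right (by norm_num) ?_
        calc (SS X x₀).card ≤ X.card := Finset.card_image_le
          _ ≤ k := hXk

include hG2 in
lemma perX (hx₀ : x₀ ∈ X) {k : ℕ} (hXk : X.card ≤ k) {δ : ℝ} (hδ : 0 < δ) (hδ1 : δ ≤ 1) :
    (((Finset.univ : Finset G).powerset.filter (fun a =>
        δ * (Fintype.card G : ℝ) ≤
          |((Finset.univ.filter (fun t => ∀ x ∈ X, t + x ∈ a)).card : ℝ)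
            - (Fintype.card G : ℝ) * (1/2 : ℝ) ^ X.card|)).card : ℝ)
      ≤ 2 ^ (Fintype.card G)
          * (2 * Real.exp (-(δ ^ 2 * (Fintype.card G : ℝ) / 2 ^ (k + 2)))) := by
  set q : ℝ := (Fintype.card G : ℝ) with hq
  set B : ℝ := ((VV X x₀).card : ℝ) with hB
  set cnt : Finset G → ℝ := fun a =>
    ((Finset.univ.filter (fun t => ∀ x ∈ X, t + x ∈ a)).card : ℝ) with hcnt
  set μ : ℝ := q * (1/2 : ℝ) ^ X.card with hμ
  have hB1 : (1:ℝ) ≤ B := by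
    rw [hB]
    exact_mod_cast VV_card_pos X x₀
  have hBpos : (0:ℝ) < B := lt_of_lt_of_le one_pos hB1
  have hBk : B ≤ 2 ^ k := by
    rw [hB]
    exact_mod_cast VV_card_le X x₀ hXk
  set lam : ℝ := δ / (2 * B) with hlam
  have hlampos : 0 < lam := by positivity
  have hlamB : lam * B = δ / 2 := by
    rw [hlam, div_mul_eq_mul_div, div_eq_div_iff (by positivity) (by norm_num)]
    ring
  have hρbound : |lam| * B ≤ 1 := by
    rw [abs_of_pos hlampos, hlamB]
    linarith
  have hρbound' : |(-lam)| * B ≤ 1 := by rwa [abs_neg]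
  set Jc : ℝ := ((JJ X x₀).card : ℝ) with hJc
  have hqJB : q = Jc * B := by
    rw [hq, hJc, hB]
    exact_mod_cast (q_eq hG2 X x₀).symm
  have hJcpos : 0 < Jc := by
    by_contra h
    push_neg at h
    have hq0 : q ≤ 0 := by nlinarith
    have : 0 < q := by
      rw [hq]
      exact_mod_cast Fintype.card_pos_iff.mpr ⟨0⟩
    linarith
  set s : ℝ := lam * (δ * q) with hs
  have hMp := markov_count hG2 X x₀ hx₀ lam s hρbound
  have hMm := markov_count hG2 X x₀ hx₀ (-lam) s hρbound'
  -- exponent computation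
  have hexp_eq : Jc * (lam ^ 2 * B ^ 2) - s = -(Jc * δ ^ 2 / 4) := by
    have h1 : lam ^ 2 * B ^ 2 = δ ^ 2 / 4 := by
      rw [← mul_pow, hlamB]
      ring
    have h2 : s = δ ^ 2 * Jc / 2 := by
      rw [hs, hqJB, hlam]
      field_simp
    rw [h1, h2]
    ring
  have hexp_eq' : (-lam) ^ 2 = lam ^ 2 := by ring
  have hexp_le : -(Jc * δ ^ 2 / 4) ≤ -(δ ^ 2 * q / 2 ^ (k + 2)) := by
    have h2k : (0:ℝ) < 2 ^ k := by positivity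
    have : δ ^ 2 * q / 2 ^ (k + 2) ≤ Jc * δ ^ 2 / 4 := by
      rw [hqJB]
      have hpow : (2:ℝ) ^ (k + 2) = 2 ^ k * 4 := by rw [pow_add]; norm_num
      rw [hpow, div_le_div_iff₀ (by positivity) (by norm_num)]
      have hδ2 : (0:ℝ) ≤ δ ^ 2 := sq_nonneg δ
      have hJnn : 0 ≤ Jc := hJcpos.le
      calc δ ^ 2 * (Jc * B) * 4 ≤ δ ^ 2 * (Jc * 2 ^ k) * 4 := by gcongr
        _ = Jc * δ ^ 2 * (2 ^ k * 4) := by ring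
    linarith
  -- absorb subsets
  set BadAbs := (Finset.univ : Finset G).powerset.filter (fun a => δ * q ≤ |cnt a - μ|) with hBadAbs
  set BadP := (Finset.univ : Finset G).powerset.filter (fun a => s ≤ lam * (cnt a - μ)) with hBadP
  set BadM := (Finset.univ : Finset G).powerset.filter (fun a => s ≤ (-lam) * (cnt a - μ)) with hBadM
  have hsub : BadAbs ⊆ BadP ∪ BadM := by
    intro a ha
    rw [hBadAbs, Finset.mem_filter] at ha
    obtain ⟨hmem, habs⟩ := ha
    rw [Finset.mem_union, hBadP, hBadM, Finset.mem_filter, Finset.mem_filter]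
    rcases le_abs.mp habs with h | h
    · left
      refine ⟨hmem, ?_⟩
      rw [hs]
      exact mul_le_mul_of_nonneg_left h hlampos.le
    · right
      refine ⟨hmem, ?_⟩
      rw [hs]
      have := mul_le_mul_of_nonneg_left h hlampos.le
      calc lam * (δ * q) ≤ lam * -(cnt a - μ) := this
        _ = -lam * (cnt a - μ) := by ring
  have hcard : (BadAbs.card : ℝ) ≤ (BadP.card : ℝ) + (BadM.card : ℝ) := by
    have := Finset.card_le_card hsub
    have h2 := Finset.card_union_le BadP BadM
    exact_mod_cast this.trans h2
  have hbound : ∀ (c : ℕ), (c : ℝ) ≤ 2 ^ (Fintype.card G)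
        * Real.exp (Jc * (lam ^ 2 * B ^ 2) - s)
      → (c : ℝ) ≤ 2 ^ (Fintype.card G) * Real.exp (-(δ ^ 2 * q / 2 ^ (k + 2))) := by
    intro c hc
    refine hc.trans ?_
    refine mul_le_mul_of_nonneg_left ?_ (by positivity)
    rw [hexp_eq]
    exact Real.exp_le_exp.mpr hexp_le
  have hP : (BadP.card : ℝ) ≤ 2 ^ (Fintype.card G) * Real.exp (-(δ ^ 2 * q / 2 ^ (k + 2))) :=
    hbound _ hMp
  have hM : (BadM.card : ℝ) ≤ 2 ^ (Fintype.card G) * Real.exp (-(δ ^ 2 * q / 2 ^ (k + 2))) := by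
    refine hbound _ ?_
    rw [← hexp_eq'] at hMp ⊢
    convert hMm using 4 <;> ring
  calc (BadAbs.card : ℝ) ≤ (BadP.card : ℝ) + (BadM.card : ℝ) := hcard
    _ ≤ 2 ^ (Fintype.card G) * Real.exp (-(δ ^ 2 * q / 2 ^ (k + 2)))
        + 2 ^ (Fintype.card G) * Real.exp (-(δ ^ 2 * q / 2 ^ (k + 2))) := add_le_add hP hM
    _ = 2 ^ (Fintype.card G) * (2 * Real.exp (-(δ ^ 2 * q / 2 ^ (k + 2)))) := by ring

end PerX

lemma family_card_le {G : Type*} [Fintype G] [DecidableEq G] [AddCommGroup G] (k : ℕ) :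
    ((Finset.univ.filter (fun X : Finset G => X.Nonempty ∧ X.card ≤ k)).card)
      ≤ (Fintype.card G) ^ k := by
  letI : Inhabited G := ⟨0⟩
  set f : Finset G → (Fin k → G) := fun X => fun i => X.toList.getD i (X.toList.head!) with hf
  have himg : ∀ X ∈ Finset.univ.filter (fun X : Finset G => X.Nonempty ∧ X.card ≤ k),
      Finset.image (f X) Finset.univ = X := by
    intro X hX
    obtain ⟨hne, hcard⟩ := (Finset.mem_filter.mp hX).2
    have hlen : X.toList.length = X.card := Finset.length_toList X
    have hnil : X.toList ≠ [] := by
      intro h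
      rw [h] at hlen
      simp at hlen
      exact Finset.card_ne_zero_of_mem hne.choose_spec hlen.symm
    ext u
    simp only [Finset.mem_image, Finset.mem_univ, true_and]
    constructor
    · rintro ⟨i, rfl⟩
      rw [hf]
      simp only
      by_cases h : (i : ℕ) < X.toList.length
      · rw [List.getD_eq_getElem _ _ h]
        exact Finset.mem_toList.mp (List.getElem_mem h)
      · rw [List.getD_eq_default _ _ (not_lt.mp h)]
        exact Finset.mem_toList.mp (List.head!_mem_self hnil)
    · intro hu
      have : u ∈ X.toList := Finset.mem_toList.mpr hu
      obtain ⟨j, hj⟩ := List.mem_iff_get.mp this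
      have hjk : (j : ℕ) < k := lt_of_lt_of_le (by rw [← hlen]; exact j.2) hcard
      refine ⟨⟨j, hjk⟩, ?_⟩
      rw [hf]
      simp only
      rw [List.getD_eq_getElem _ _ (by exact j.2), ← hj]
      rfl
  have hinj : Set.InjOn f (Finset.univ.filter (fun X : Finset G => X.Nonempty ∧ X.card ≤ k)) := by
    intro X hX Y hY hXY
    rw [← himg X (by exact_mod_cast hX), ← himg Y (by exact_mod_cast hY), hXY]
  calc (Finset.univ.filter (fun X : Finset G => X.Nonempty ∧ X.card ≤ k)).card
      ≤ (Finset.univ : Finset (Fin k → G)).card := by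
        refine Finset.card_le_card_of_injOn f (fun _ _ => Finset.mem_univ _) ?_
        exact_mod_cast hinj
    _ = (Fintype.card G) ^ k := by
        rw [Finset.card_univ, Fintype.card_fun, Fintype.card_fin]

lemma lin_lt_exp (c : ℝ) (hc : 0 < c) (k : ℕ) :
    ∃ n : ℕ, ∀ N : ℕ, n < N → (k : ℝ) * N + 1 < c * 2 ^ N := by
  obtain ⟨n₀, hn₀⟩ := pow_unbounded_of_one_lt ((2 * (k : ℝ) + 2) / c) one_lt_two
  refine ⟨2 * n₀ + 1, fun N hN => ?_⟩
  set m := N - n₀ with hm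
  have hNm : N = n₀ + m := by omega
  have hmN : (N : ℝ) ≤ 2 * m := by
    have : N ≤ 2 * m := by omega
    exact_mod_cast this
  have h2m : (m : ℝ) + 1 ≤ 2 ^ m := by
    have := @Nat.lt_two_pow_self m
    have h' : m + 1 ≤ 2 ^ m := this
    exact_mod_cast h'
  have hsplit : (2 : ℝ) ^ N = 2 ^ n₀ * 2 ^ m := by rw [hNm, pow_add]
  have h1 : 2 * (k : ℝ) + 2 < c * 2 ^ n₀ := by
    rw [div_lt_iff₀ hc] at hn₀
    linarith [hn₀]
  have h2mpos : (0 : ℝ) < 2 ^ m := by positivity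
  have hk0 : (0 : ℝ) ≤ (k : ℝ) := Nat.cast_nonneg k
  have hm0 : (0 : ℝ) ≤ (m : ℝ) := Nat.cast_nonneg m
  calc (k : ℝ) * N + 1 ≤ (2 * k + 2) * ((m : ℝ) + 1) := by nlinarith
    _ ≤ (2 * k + 2) * 2 ^ m := by nlinarith
    _ < c * 2 ^ n₀ * 2 ^ m := by nlinarith
    _ = c * 2 ^ N := by rw [hsplit]; ring

end S3

/-- For every `k` and `ε, δ > 0` there is `n` such that for every finite `I` with
`|I| > n` there is a partition `2^I = a⁰ ∪ a¹` such that for every nonempty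
`X ⊆ 2^I` with `|X| ≤ k`, `|⋂_{x∈X}(a⁰+x)|/2^{|I|}` is within `δ` of `2^{-|X|}`. -/
theorem stmt3 (k : ℕ) (ε δ : ℝ) (hε : 0 < ε) (hδ : 0 < δ) :
    ∃ n : ℕ, ∀ (I : Type) [Fintype I] [DecidableEq I], n < Fintype.card I →
      ∃ a0 a1 : Finset (I → ZMod 2),
        a0 ∪ a1 = Finset.univ ∧ Disjoint a0 a1 ∧
        ∀ X : Finset (I → ZMod 2), X.Nonempty → X.card ≤ k →
          |((Finset.univ.filter
              (fun t => ∀ x ∈ X, t ∈ a0.image (· + x))).card : ℝ) / 2 ^ Fintype.card I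
            - (1 / 2 : ℝ) ^ X.card| < δ := by
  set δ' : ℝ := min δ (1/2) with hδ'def
  have hδ'pos : 0 < δ' := lt_min hδ (by norm_num)
  have hδ'le1 : δ' ≤ 1 := (min_le_right _ _).trans (by norm_num)
  have hδ'leδ : δ' ≤ δ := min_le_left _ _
  set c : ℝ := δ' ^ 2 / 2 ^ (k + 2) with hcdef
  have hcpos : 0 < c := by positivity
  obtain ⟨n, hn⟩ := S3.lin_lt_exp c hcpos k
  refine ⟨n, fun I _ _ hNI => ?_⟩
  have hG2 : ∀ x : I → ZMod 2, x + x = 0 :=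
    fun x => funext (fun i => CharTwo.add_self_eq_zero (x i))
  set N := Fintype.card I with hNdef
  have hcardG : Fintype.card (I → ZMod 2) = 2 ^ N := by
    rw [Fintype.card_fun, ZMod.card]
  set q : ℝ := (Fintype.card (I → ZMod 2) : ℝ) with hqdef
  have hq2 : q = (2:ℝ) ^ N := by rw [hqdef, hcardG]; push_cast; ring
  have hqpos : (0:ℝ) < q := by rw [hq2]; positivity
  set 𝒳 := Finset.univ.filter (fun X : Finset (I → ZMod 2) => X.Nonempty ∧ X.card ≤ k)
    with h𝒳
  set Bad : Finset (I → ZMod 2) → Finset (Finset (I → ZMod 2)) := fun X =>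
    (Finset.univ : Finset (I → ZMod 2)).powerset.filter (fun a =>
      δ' * (Fintype.card (I → ZMod 2) : ℝ) ≤
        |((Finset.univ.filter (fun t => ∀ x ∈ X, t + x ∈ a)).card : ℝ)
          - (Fintype.card (I → ZMod 2) : ℝ) * (1/2 : ℝ) ^ X.card|) with hBaddef
  have hperX : ∀ X ∈ 𝒳, ((Bad X).card : ℝ)
      ≤ 2 ^ (Fintype.card (I → ZMod 2))
          * (2 * Real.exp (-(δ' ^ 2 * q / 2 ^ (k + 2)))) := by
    intro X hX
    obtain ⟨hne, hcard⟩ := (Finset.mem_filter.mp hX).2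
    obtain ⟨x₀, hx₀⟩ := hne
    exact S3.perX hG2 X x₀ hx₀ hcard hδ'pos hδ'le1
  -- numeric bound
  have hnN : (k : ℝ) * N + 1 < c * 2 ^ N := hn N hNI
  have hlogpos : (0:ℝ) < Real.log 2 := Real.log_pos (by norm_num)
  have hlog1 : Real.log 2 < 1 := by
    have := Real.log_two_lt_d9
    linarith
  have hkN1pos : (0:ℝ) < (k : ℝ) * N + 1 := by positivity
  have hloglt : ((k : ℝ) * N + 1) * Real.log 2 < c * 2 ^ N := by
    calc ((k : ℝ) * N + 1) * Real.log 2 < ((k : ℝ) * N + 1) * 1 := by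
          exact mul_lt_mul_of_pos_left hlog1 hkN1pos
      _ = (k : ℝ) * N + 1 := mul_one _
      _ < c * 2 ^ N := hnN
  have hqk2 : q ^ k * 2 = Real.exp (((k : ℝ) * N + 1) * Real.log 2) := by
    rw [add_mul, one_mul, Real.exp_add, Real.exp_log (by norm_num : (0:ℝ) < 2)]
    congr 1
    have hcast : (k : ℝ) * N = ((k * N : ℕ) : ℝ) := by push_cast; ring
    rw [hcast, Real.exp_nat_mul, Real.exp_log (by norm_num : (0:ℝ) < 2), hq2,
      ← pow_mul, Nat.mul_comm]
  have hkey : q ^ k * (2 * Real.exp (-(δ' ^ 2 * q / 2 ^ (k + 2)))) < 1 := by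
    have hcq : c * q = δ' ^ 2 * q / 2 ^ (k + 2) := by rw [hcdef]; ring
    have h1 : q ^ k * 2 < Real.exp (c * q) := by
      rw [hqk2, Real.exp_lt_exp, hq2]
      exact hloglt
    have h2 : q ^ k * 2 * Real.exp (-(c * q)) < Real.exp (c * q) * Real.exp (-(c * q)) := by
      exact mul_lt_mul_of_pos_right h1 (Real.exp_pos _)
    rw [← Real.exp_add] at h2
    simp only [add_neg_cancel, Real.exp_zero] at h2
    rw [← hcq]
    calc q ^ k * (2 * Real.exp (-(c * q))) = q ^ k * 2 * Real.exp (-(c * q)) := by ring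
      _ < 1 := h2
  -- the union of bad sets is smaller than the powerset
  have hbiU : ((𝒳.biUnion Bad).card : ℝ)
      < (((Finset.univ : Finset (I → ZMod 2)).powerset).card : ℝ) := by
    have h1 : ((𝒳.biUnion Bad).card : ℝ) ≤ ∑ X ∈ 𝒳, ((Bad X).card : ℝ) := by
      have := Finset.card_biUnion_le (s := 𝒳) (t := Bad)
      calc ((𝒳.biUnion Bad).card : ℝ) ≤ ((∑ X ∈ 𝒳, (Bad X).card : ℕ) : ℝ) := by
            exact_mod_cast this
        _ = ∑ X ∈ 𝒳, ((Bad X).card : ℝ) := by push_cast; rfl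
    have h2 : ∑ X ∈ 𝒳, ((Bad X).card : ℝ)
        ≤ (𝒳.card : ℝ) * (2 ^ (Fintype.card (I → ZMod 2))
            * (2 * Real.exp (-(δ' ^ 2 * q / 2 ^ (k + 2))))) := by
      calc ∑ X ∈ 𝒳, ((Bad X).card : ℝ)
          ≤ ∑ _X ∈ 𝒳, (2 ^ (Fintype.card (I → ZMod 2))
              * (2 * Real.exp (-(δ' ^ 2 * q / 2 ^ (k + 2))))) :=
            Finset.sum_le_sum hperX
        _ = _ := by rw [Finset.sum_const, nsmul_eq_mul]
    have h𝒳card : (𝒳.card : ℝ) ≤ q ^ k := by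
      have := S3.family_card_le (G := I → ZMod 2) k
      calc (𝒳.card : ℝ) ≤ ((Fintype.card (I → ZMod 2) ^ k : ℕ) : ℝ) := by exact_mod_cast this
        _ = q ^ k := by push_cast; rfl
    have h3 : (𝒳.card : ℝ) * (2 ^ (Fintype.card (I → ZMod 2))
          * (2 * Real.exp (-(δ' ^ 2 * q / 2 ^ (k + 2)))))
        ≤ q ^ k * (2 ^ (Fintype.card (I → ZMod 2))
          * (2 * Real.exp (-(δ' ^ 2 * q / 2 ^ (k + 2))))) := by
      refine mul_le_mul_of_nonneg_right h𝒳card (by positivity)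
    have h4 : q ^ k * (2 ^ (Fintype.card (I → ZMod 2))
          * (2 * Real.exp (-(δ' ^ 2 * q / 2 ^ (k + 2)))))
        < 2 ^ (Fintype.card (I → ZMod 2)) := by
      calc q ^ k * (2 ^ (Fintype.card (I → ZMod 2))
            * (2 * Real.exp (-(δ' ^ 2 * q / 2 ^ (k + 2)))))
          = 2 ^ (Fintype.card (I → ZMod 2))
            * (q ^ k * (2 * Real.exp (-(δ' ^ 2 * q / 2 ^ (k + 2))))) := by ring
        _ < 2 ^ (Fintype.card (I → ZMod 2)) * 1 :=
            mul_lt_mul_of_pos_left hkey (by positivity)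
        _ = 2 ^ (Fintype.card (I → ZMod 2)) := mul_one _
    have h5 : (((Finset.univ : Finset (I → ZMod 2)).powerset).card : ℝ)
        = 2 ^ (Fintype.card (I → ZMod 2)) := by
      rw [Finset.card_powerset, Finset.card_univ]
      push_cast
      rfl
    rw [h5]
    exact lt_of_le_of_lt (h1.trans (h2.trans h3)) h4
  have hbiUn : (𝒳.biUnion Bad).card
      < ((Finset.univ : Finset (I → ZMod 2)).powerset).card := by exact_mod_cast hbiU
  have hex : ∃ a ∈ (Finset.univ : Finset (I → ZMod 2)).powerset, a ∉ 𝒳.biUnion Bad := by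
    by_contra h
    push_neg at h
    have hsub : (Finset.univ : Finset (I → ZMod 2)).powerset ⊆ 𝒳.biUnion Bad := h
    exact absurd (Finset.card_le_card hsub) (not_le.mpr hbiUn)
  obtain ⟨a0, _, ha0⟩ := hex
  refine ⟨a0, Finset.univ \ a0, Finset.union_sdiff_of_subset (Finset.subset_univ a0),
    Finset.disjoint_sdiff, ?_⟩
  intro X hne hcard
  have hX𝒳 : X ∈ 𝒳 := Finset.mem_filter.mpr ⟨Finset.mem_univ _, hne, hcard⟩
  have hnotbad : a0 ∉ Bad X := fun h => ha0 (Finset.mem_biUnion.mpr ⟨X, hX𝒳, h⟩)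
  rw [hBaddef] at hnotbad
  simp only [Finset.mem_filter, Finset.mem_powerset, Finset.subset_univ, true_and,
    not_le] at hnotbad
  -- rewrite the goal's filter
  have hfilter : Finset.univ.filter (fun t => ∀ x ∈ X, t ∈ a0.image (· + x))
      = Finset.univ.filter (fun t : I → ZMod 2 => ∀ x ∈ X, t + x ∈ a0) := by
    refine Finset.filter_congr (fun t _ => ?_)
    constructor
    · intro h x hx
      obtain ⟨s', hs', hst⟩ := Finset.mem_image.mp (h x hx)
      have : s' = t + x := by
        have h1 : s' + x + x = t + x := by rw [hst]
        rwa [add_assoc, hG2 x, add_zero] at h1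
      rwa [← this]
    · intro h x hx
      refine Finset.mem_image.mpr ⟨t + x, h x hx, ?_⟩
      rw [add_assoc, hG2 x, add_zero]
  rw [hfilter]
  have habs := hnotbad
  -- divide the inequality by q
  have h2N : ((2:ℝ) ^ Fintype.card I) = q := by rw [hq2]
  rw [h2N]
  have hqne : q ≠ 0 := ne_of_gt hqpos
  have hrw : ((Finset.univ.filter (fun t : I → ZMod 2 => ∀ x ∈ X, t + x ∈ a0)).card : ℝ) / q
      - (1/2 : ℝ) ^ X.card
      = (((Finset.univ.filter (fun t : I → ZMod 2 => ∀ x ∈ X, t + x ∈ a0)).card : ℝ)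
          - q * (1/2 : ℝ) ^ X.card) / q := by
    rw [sub_div, mul_div_cancel_left₀ _ hqne]
  rw [hrw, abs_div, abs_of_pos hqpos, div_lt_iff₀ hqpos]
  have hfinal : |((Finset.univ.filter (fun t : I → ZMod 2 => ∀ x ∈ X, t + x ∈ a0)).card : ℝ)
      - q * (1/2 : ℝ) ^ X.card| < δ' * q := hnotbad
  calc |((Finset.univ.filter (fun t : I → ZMod 2 => ∀ x ∈ X, t + x ∈ a0)).card : ℝ)
      - q * (1/2 : ℝ) ^ X.card| < δ' * q := hfinal
    _ ≤ δ * q := mul_le_mul_of_nonneg_right hδ'leδ hqpos.le
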